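/- For every integer n ≥ 0, the total number of parts, summed over all partitions of n into distinct parts, minus the total number of different part sizes, summed over all partitions of n into odd parts, equals c(n), the number of partitions of n in which exactly one part size occurs exactly three times and every other part size occurs exactly once. -/

import Mathlib

/-!
Statement 19 (Andrews' theorem / Beck's conjecture): For every integer `n ≥ 0`, the total
number of parts, summed over all partitions of `n` into distinct parts, minus the total
number of different part sizes, summed over all partitions of `n` into odd parts, equals
`c(n)`, the number of partitions of `n` in which exactly one part size occurs exactly
three times and every other part size occurs exactly once.  The difference is taken in `ℤ`.
-/

/-!
# Euler's Partition Theorem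

This file proves Theorem 45 from the [100 Theorems List](https://www.cs.ru.nl/~freek/100/).

The theorem concerns the counting of integer partitions -- ways of
writing a positive integer `n` as a sum of positive integer parts.

Specifically, Euler proved that the number of integer partitions of `n`
into *distinct* parts equals the number of partitions of `n` into *odd*
parts.

## Proof outline

The proof is based on the generating functions for odd and distinct partitions, which turn out to be
equal:

$$\prod_{i=0}^\infty \frac {1}{1-X^{2i+1}} = \prod_{i=0}^\infty (1+X^{i+1})$$

In fact, we do not take a limit: it turns out that comparing the `n`'th coefficients of the partial
products up to `m := n + 1` is sufficient.

In particular, we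

1. define the partial product for the generating function for odd partitions `partialOddGF m` :=
  $$\prod_{i=0}^m \frac {1}{1-X^{2i+1}}$$;
2. prove `oddGF_prop`: if `m` is big enough (`m * 2 > n`), the partial product's coefficient counts
  the number of odd partitions;
3. define the partial product for the generating function for distinct partitions
  `partialDistinctGF m` := $$\prod_{i=0}^m (1+X^{i+1})$$;
4. prove `distinctGF_prop`: if `m` is big enough (`m + 1 > n`), the `n`th coefficient of the
  partial product counts the number of distinct partitions of `n`;
5. prove `same_coeffs`: if m is big enough (`m ≥ n`), the `n`th coefficient of the partial products
  are equal;
6. combine the above in `partition_theorem`.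

## References
https://en.wikipedia.org/wiki/Partition_(number_theory)#Odd_parts_and_distinct_parts
-/


open PowerSeries

namespace Theorems100

noncomputable section

variable {α : Type*}

open Finset

open scoped Classical

/-- The partial product for the generating function for odd partitions.
TODO: As `m` tends to infinity, this converges (in the `X`-adic topology).

If `m` is sufficiently large, the `i`th coefficient gives the number of odd partitions of the
natural number `i`: proved in `oddGF_prop`.
It is stated for an arbitrary field `α`, though it usually suffices to use `ℚ` or `ℝ`.
-/
def partialOddGF (m : ℕ) [Field α] :=
  ∏ i ∈ range m, (1 - (X : PowerSeries α) ^ (2 * i + 1))⁻¹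

/-- The partial product for the generating function for distinct partitions.
TODO: As `m` tends to infinity, this converges (in the `X`-adic topology).

If `m` is sufficiently large, the `i`th coefficient gives the number of distinct partitions of the
natural number `i`: proved in `distinctGF_prop`.
It is stated for an arbitrary commutative semiring `α`, though it usually suffices to use `ℕ`, `ℚ`
or `ℝ`.
-/
def partialDistinctGF (m : ℕ) [CommSemiring α] :=
  ∏ i ∈ range m, (1 + (X : PowerSeries α) ^ (i + 1))

open Finset.HasAntidiagonal

universe u
variable {ι : Type u}

/-- A convenience constructor for the power series whose coefficients indicate a subset. -/
def indicatorSeries (α : Type*) [Semiring α] (s : Set ℕ) : PowerSeries α :=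
  PowerSeries.mk fun n => if n ∈ s then 1 else 0

theorem coeff_indicator (s : Set ℕ) [Semiring α] (n : ℕ) :
    coeff (R := α) n (indicatorSeries _ s) = if n ∈ s then 1 else 0 :=
  coeff_mk _ _

theorem coeff_indicator_pos (s : Set ℕ) [Semiring α] (n : ℕ) (h : n ∈ s) :
    coeff (R := α) n (indicatorSeries _ s) = 1 := by rw [coeff_indicator, if_pos h]

theorem coeff_indicator_neg (s : Set ℕ) [Semiring α] (n : ℕ) (h : n ∉ s) :
    coeff (R := α) n (indicatorSeries _ s) = 0 := by rw [coeff_indicator, if_neg h]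

theorem constantCoeff_indicator (s : Set ℕ) [Semiring α] :
    constantCoeff (R := α) (indicatorSeries _ s) = if 0 ∈ s then 1 else 0 :=
  rfl

theorem two_series (i : ℕ) [Semiring α] :
    1 + (X : PowerSeries α) ^ i.succ = indicatorSeries α {0, i.succ} := by
  ext n
  simp only [coeff_indicator, coeff_one, coeff_X_pow, Set.mem_insert_iff, Set.mem_singleton_iff,
    map_add]
  cases' n with d
  · simp [(Nat.succ_ne_zero i).symm]
  · simp [Nat.succ_ne_zero d]

theorem num_series' [Field α] (i : ℕ) :
    (1 - (X : PowerSeries α) ^ (i + 1))⁻¹ = indicatorSeries α {k | i + 1 ∣ k} := by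
  rw [PowerSeries.inv_eq_iff_mul_eq_one]
  · ext n
    cases n with
    | zero => simp [mul_sub, zero_pow, constantCoeff_indicator]
    | succ n =>
      simp only [coeff_one, if_false, mul_sub, mul_one, coeff_indicator,
        LinearMap.map_sub, reduceCtorEq]
      simp_rw [coeff_mul, coeff_X_pow, coeff_indicator, @boole_mul _ _ _ _]
      rw [Finset.Nat.sum_antidiagonal_eq_sum_range_succ_mk]
      simp only [Set.mem_setOf_eq]
      rcases le_or_gt i n with hi | hi
      · rw [Finset.sum_eq_single (n - i)]
        · have e1 : n + 1 - (n - i) = i + 1 := by omega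
          have e2 : n + 1 = (n - i) + (i + 1) := by omega
          simp only [e1, if_true]
          rw [e2]
          simp only [Nat.dvd_add_self_right, sub_self]
        · intro b _ hb
          have : n + 1 - b ≠ i + 1 := by omega
          simp [this]
        · intro h
          simp only [Finset.mem_range] at h
          omega
      · rw [Finset.sum_eq_zero]
        · rw [if_neg (Nat.not_dvd_of_pos_of_lt (by omega) (by omega))]
          simp
        · intro k hk
          simp only [Finset.mem_range] at hk
          have : n + 1 - k ≠ i + 1 := by omega
          simp [this]
  · simp [zero_pow]

def mkOdd : ℕ ↪ ℕ :=
  ⟨fun i => 2 * i + 1, fun x y h => by linarith⟩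

-- The main workhorse of the partition theorem proof.
theorem partialGF_prop (α : Type*) [CommSemiring α] (n : ℕ) (s : Finset ℕ) (hs : ∀ i ∈ s, 0 < i)
    (c : ℕ → Set ℕ) (hc : ∀ i, i ∉ s → 0 ∈ c i) :
    #{p : n.Partition | (∀ j, p.parts.count j ∈ c j) ∧ ∀ j ∈ p.parts, j ∈ s} =
      coeff (R := α) n (∏ i ∈ s, indicatorSeries α ((· * i) '' c i)) := by
  simp_rw [coeff_prod, coeff_indicator, prod_boole, sum_boole]
  apply congr_arg
  simp only [mem_univ, forall_true_left, not_and, not_forall, exists_prop,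
    Set.mem_image, not_exists]
  set φ : (a : Nat.Partition n) →
    a ∈ filter (fun p ↦ (∀ (j : ℕ), Multiset.count j p.parts ∈ c j) ∧ ∀ j ∈ p.parts, j ∈ s) univ →
    ℕ →₀ ℕ := fun p _ => {
      toFun := fun i => Multiset.count i p.parts • i
      support := Finset.filter (fun i => i ≠ 0) p.parts.toFinset
      mem_support_toFun := fun a => by
        simp only [smul_eq_mul, ne_eq, mul_eq_zero, Multiset.count_eq_zero]
        rw [not_or, not_not]
        simp only [Multiset.mem_toFinset, not_not, mem_filter] }
  refine Finset.card_bij φ ?_ ?_ ?_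
  · intro a ha
    simp only [φ, not_forall, not_exists, not_and, exists_prop, mem_filter]
    rw [mem_finsuppAntidiag]
    dsimp only [ne_eq, smul_eq_mul, id_eq, eq_mpr_eq_cast, le_eq_subset, Finsupp.coe_mk]
    simp only [mem_univ, forall_true_left, not_and, not_forall, exists_prop,
      mem_filter, true_and] at ha
    refine ⟨⟨?_, fun i ↦ ?_⟩, fun i _ ↦ ⟨a.parts.count i, ha.1 i, rfl⟩⟩
    · conv_rhs => simp [← a.parts_sum]
      rw [sum_multiset_count_of_subset _ s]
      · simp only [smul_eq_mul]
      · intro i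
        simp only [Multiset.mem_toFinset, not_not, mem_filter]
        apply ha.2
    · simp only [ne_eq, Multiset.mem_toFinset, not_not, mem_filter, and_imp]
      exact fun hi _ ↦ ha.2 i hi
  · intro p₁ hp₁ p₂ hp₂ h
    apply Nat.Partition.ext
    simp only [true_and, mem_univ, mem_filter] at hp₁ hp₂
    ext i
    simp only [φ, ne_eq, Multiset.mem_toFinset, not_not, smul_eq_mul, Finsupp.mk.injEq] at h
    by_cases hi : i = 0
    · rw [hi]
      rw [Multiset.count_eq_zero_of_notMem]
      · rw [Multiset.count_eq_zero_of_notMem]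
        intro a; exact Nat.lt_irrefl 0 (hs 0 (hp₂.2 0 a))
      intro a; exact Nat.lt_irrefl 0 (hs 0 (hp₁.2 0 a))
    · rw [← mul_left_inj' hi]
      rw [funext_iff] at h
      exact h.2 i
  · simp only [φ, mem_filter, mem_finsuppAntidiag, mem_univ, exists_prop, true_and, and_assoc]
    rintro f ⟨hf, hf₃, hf₄⟩
    have hf' : f ∈ finsuppAntidiag s n := mem_finsuppAntidiag.mpr ⟨hf, hf₃⟩
    simp only [mem_finsuppAntidiag] at hf'
    refine ⟨⟨∑ i ∈ s, Multiset.replicate (f i / i) i, ?_, ?_⟩, ?_, ?_, ?_⟩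
    · intro i hi
      simp only [exists_prop, Multiset.mem_sum, mem_map, Function.Embedding.coeFn_mk] at hi
      rcases hi with ⟨t, ht, z⟩
      apply hs
      rwa [Multiset.eq_of_mem_replicate z]
    · simp_rw [Multiset.sum_sum, Multiset.sum_replicate, Nat.nsmul_eq_mul]
      rw [← hf'.1]
      refine sum_congr rfl fun i hi => Nat.div_mul_cancel ?_
      rcases hf₄ i hi with ⟨w, _, hw₂⟩
      rw [← hw₂]
      exact dvd_mul_left _ _
    · intro i
      simp_rw [Multiset.count_sum', Multiset.count_replicate, sum_ite_eq']
      split_ifs with h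
      · rcases hf₄ i h with ⟨w, hw₁, hw₂⟩
        rwa [← hw₂, Nat.mul_div_cancel _ (hs i h)]
      · exact hc _ h
    · intro i hi
      rw [Multiset.mem_sum] at hi
      rcases hi with ⟨j, hj₁, hj₂⟩
      rwa [Multiset.eq_of_mem_replicate hj₂]
    · ext i
      simp_rw [Multiset.count_sum', Multiset.count_replicate, sum_ite_eq']
      simp only [ne_eq, Multiset.mem_toFinset, not_not, smul_eq_mul, ite_mul,
        zero_mul, Finsupp.coe_mk]
      split_ifs with h
      · apply Nat.div_mul_cancel
        rcases hf₄ i h with ⟨w, _, hw₂⟩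
        apply Dvd.intro_left _ hw₂
      · apply symm
        rw [← Finsupp.notMem_support_iff]
        exact notMem_mono hf'.2 h

theorem partialOddGF_prop [Field α] (n m : ℕ) :
    #{p : n.Partition | ∀ j ∈ p.parts, j ∈ (range m).map mkOdd} = coeff (R := α) n (partialOddGF m) := by
  rw [partialOddGF]
  convert partialGF_prop α n
    ((range m).map mkOdd) _ (fun _ => Set.univ) (fun _ _ => trivial) using 2
  · congr
    simp only [true_and, forall_const, Set.mem_univ]
  · rw [Finset.prod_map]
    simp_rw [num_series']
    congr! 2 with x
    ext k
    constructor
    · rintro ⟨p, rfl⟩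
      refine ⟨p, ⟨⟩, ?_⟩
      apply mul_comm
    rintro ⟨a_w, -, rfl⟩
    apply Dvd.intro_left a_w rfl
  · intro i
    rw [mem_map]
    rintro ⟨a, -, rfl⟩
    exact Nat.succ_pos _

/-- If m is big enough, the partial product's coefficient counts the number of odd partitions -/
theorem oddGF_prop [Field α] (n m : ℕ) (h : n < m * 2) :
    #(Nat.Partition.odds n) = coeff (R := α) n (partialOddGF m) := by
  rw [← partialOddGF_prop, Nat.Partition.odds, Nat.Partition.restricted]
  congr with p
  apply forall₂_congr
  intro i hi
  have hin : i ≤ n := by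
    simpa [p.parts_sum] using Multiset.single_le_sum (fun _ _ => Nat.zero_le _) _ hi
  simp only [mkOdd, exists_prop, mem_range, Function.Embedding.coeFn_mk, mem_map]
  constructor
  · intro hi₂
    have := Nat.mod_add_div i 2
    rw [Nat.not_even_iff] at hi₂
    rw [hi₂, add_comm] at this
    refine ⟨i / 2, ?_, this⟩
    rw [Nat.div_lt_iff_lt_mul zero_lt_two]
    exact lt_of_le_of_lt hin h
  · rintro ⟨a, -, rfl⟩
    rw [even_iff_two_dvd]
    apply Nat.two_not_dvd_two_mul_add_one

theorem partialDistinctGF_prop [CommSemiring α] (n m : ℕ) :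
    #{p : n.Partition |
        p.parts.Nodup ∧ ∀ j ∈ p.parts, j ∈ (range m).map ⟨Nat.succ, Nat.succ_injective⟩} =
      coeff (R := α) n (partialDistinctGF m) := by
  rw [partialDistinctGF]
  convert partialGF_prop α n
    ((range m).map ⟨Nat.succ, Nat.succ_injective⟩) _ (fun _ => {0, 1}) (fun _ _ => Or.inl rfl)
    using 2
  · congr! with p
    rw [Multiset.nodup_iff_count_le_one]
    congr! 1 with i
    rcases Multiset.count i p.parts with (_ | _ | ms) <;> simp
  · simp_rw [Finset.prod_map, two_series]
    congr with i
    simp [Set.image_pair]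
  · simp only [mem_map, Function.Embedding.coeFn_mk]
    rintro i ⟨_, _, rfl⟩
    apply Nat.succ_pos

/-- If m is big enough, the partial product's coefficient counts the number of distinct partitions
-/
theorem distinctGF_prop [CommSemiring α] (n m : ℕ) (h : n < m + 1) :
    #(Nat.Partition.distincts n) = coeff (R := α) n (partialDistinctGF m) := by
  rw [← partialDistinctGF_prop, Nat.Partition.distincts]
  congr with p
  apply (and_iff_left _).symm
  intro i hi
  have : i ≤ n := by
    simpa [p.parts_sum] using Multiset.single_le_sum (fun _ _ => Nat.zero_le _) _ hi
  simp only [mkOdd, exists_prop, mem_range, Function.Embedding.coeFn_mk, mem_map]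
  refine ⟨i - 1, ?_, Nat.succ_pred_eq_of_pos (p.parts_pos hi)⟩
  rw [tsub_lt_iff_right (Nat.one_le_iff_ne_zero.mpr (p.parts_pos hi).ne')]
  exact lt_of_le_of_lt this h

/-- The key proof idea for the partition theorem, showing that the generating functions for both
sequences are ultimately the same (since the factor converges to 0 as m tends to infinity).
It's enough to not take the limit though, and just consider large enough `m`.
-/
theorem same_gf [Field α] (m : ℕ) :
    (partialOddGF m * (range m).prod fun i => 1 - (X : PowerSeries α) ^ (m + i + 1)) =
      partialDistinctGF m := by
  rw [partialOddGF, partialDistinctGF]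
  induction' m with m ih
  · simp
  set! π₀ : PowerSeries α := ∏ i ∈ range m, (1 - X ^ (m + 1 + i + 1)) with hπ₀
  set! π₁ : PowerSeries α := ∏ i ∈ range m, (1 - X ^ (2 * i + 1))⁻¹ with hπ₁
  set! π₂ : PowerSeries α := ∏ i ∈ range m, (1 - X ^ (m + i + 1)) with hπ₂
  set! π₃ : PowerSeries α := ∏ i ∈ range m, (1 + X ^ (i + 1)) with hπ₃
  rw [← hπ₃] at ih
  have h : constantCoeff (R := α) (1 - X ^ (2 * m + 1)) ≠ 0 := by
    rw [RingHom.map_sub, RingHom.map_pow, constantCoeff_one, constantCoeff_X,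
      zero_pow (2 * m).succ_ne_zero, sub_zero]
    exact one_ne_zero
  calc
    (∏ i ∈ range (m + 1), (1 - X ^ (2 * i + 1))⁻¹) *
          ∏ i ∈ range (m + 1), (1 - X ^ (m + 1 + i + 1)) =
        π₁ * (1 - X ^ (2 * m + 1))⁻¹ * (π₀ * (1 - X ^ (m + 1 + m + 1))) := by
      rw [prod_range_succ _ m, ← hπ₁, prod_range_succ _ m, ← hπ₀]
    _ = π₁ * (1 - X ^ (2 * m + 1))⁻¹ * (π₀ * ((1 + X ^ (m + 1)) * (1 - X ^ (m + 1)))) := by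
      rw [← sq_sub_sq, one_pow, add_assoc _ m 1, ← two_mul (m + 1), pow_mul']
    _ = π₀ * (1 - X ^ (m + 1)) * (1 - X ^ (2 * m + 1))⁻¹ * (π₁ * (1 + X ^ (m + 1))) := by ring
    _ =
        (∏ i ∈ range (m + 1), (1 - X ^ (m + 1 + i))) * (1 - X ^ (2 * m + 1))⁻¹ *
          (π₁ * (1 + X ^ (m + 1))) := by
      rw [prod_range_succ', add_zero, hπ₀]; simp_rw [← add_assoc]
    _ = π₂ * (1 - X ^ (m + 1 + m)) * (1 - X ^ (2 * m + 1))⁻¹ * (π₁ * (1 + X ^ (m + 1))) := by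
      rw [add_right_comm, hπ₂, ← prod_range_succ]; simp_rw [add_right_comm]
    _ = π₂ * (1 - X ^ (2 * m + 1)) * (1 - X ^ (2 * m + 1))⁻¹ * (π₁ * (1 + X ^ (m + 1))) := by
      rw [two_mul, add_right_comm _ m 1]
    _ = (1 - X ^ (2 * m + 1)) * (1 - X ^ (2 * m + 1))⁻¹ * π₂ * (π₁ * (1 + X ^ (m + 1))) := by ring
    _ = π₂ * (π₁ * (1 + X ^ (m + 1))) := by rw [PowerSeries.mul_inv_cancel _ h, one_mul]
    _ = π₁ * π₂ * (1 + X ^ (m + 1)) := by ring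
    _ = π₃ * (1 + X ^ (m + 1)) := by rw [ih]
    _ = _ := by rw [prod_range_succ]

theorem same_coeffs [Field α] (m n : ℕ) (h : n ≤ m) :
    coeff (R := α) n (partialOddGF m) = coeff (R := α) n (partialDistinctGF m) := by
  rw [← same_gf, coeff_mul_prod_one_sub_of_lt_order]
  rintro i -
  rw [order_X_pow]
  exact mod_cast Nat.lt_succ_of_le (le_add_right h)

theorem partition_theorem (n : ℕ) : #(Nat.Partition.odds n) = #(Nat.Partition.distincts n) := by
  suffices (#(Nat.Partition.odds n) : ℚ) = #(Nat.Partition.distincts n) from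
    mod_cast this
  rw [distinctGF_prop n (n + 1) (by linarith)]
  rw [oddGF_prop n (n + 1) (by linarith)]
  apply same_coeffs (n + 1) n n.le_succ

end

end Theorems100


/-- `c(n)`: the number of partitions of `n` in which exactly one part size occurs exactly
three times while every other part size occurs exactly once. -/
def cBeck (n : ℕ) : ℕ :=
  ((Finset.univ : Finset (Nat.Partition n)).filter
    (fun π => ∃ a ∈ π.parts.toFinset, π.parts.count a = 3 ∧
      ∀ b ∈ π.parts.toFinset, b ≠ a → π.parts.count b = 1)).card

namespace AndrewsBeck
open Finset

/-- Multisets of parts of distinct partitions of `m`. -/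
def DD (m : ℕ) : Finset (Multiset ℕ) :=
  (Nat.Partition.distincts m).image Nat.Partition.parts

/-- Multisets of parts of odd partitions of `m`. -/
def OO (m : ℕ) : Finset (Multiset ℕ) :=
  (Nat.Partition.odds m).image Nat.Partition.parts

def Dav (m k : ℕ) : ℕ := ((DD m).filter (fun s => k ∉ s)).card

def D (m : ℕ) : ℕ := (Nat.Partition.distincts m).card
def O (m : ℕ) : ℕ := (Nat.Partition.odds m).card

lemma parts_injective (m : ℕ) : Function.Injective (Nat.Partition.parts (n := m)) := by
  intro p q h
  cases p; cases q; simpa using h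

lemma mem_DD {m : ℕ} {s : Multiset ℕ} :
    s ∈ DD m ↔ s.sum = m ∧ (∀ x ∈ s, 0 < x) ∧ s.Nodup := by
  constructor
  · rintro hs
    obtain ⟨π, hπ, rfl⟩ := Finset.mem_image.1 hs
    rw [Nat.Partition.distincts, Finset.mem_filter] at hπ
    exact ⟨π.parts_sum, fun x hx => π.parts_pos hx, hπ.2⟩
  · rintro ⟨h1, h2, h3⟩
    refine Finset.mem_image.2 ⟨⟨s, fun hi => h2 _ hi, h1⟩, ?_, rfl⟩
    rw [Nat.Partition.distincts, Finset.mem_filter]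
    exact ⟨Finset.mem_univ _, h3⟩

lemma mem_OO {m : ℕ} {s : Multiset ℕ} :
    s ∈ OO m ↔ s.sum = m ∧ (∀ x ∈ s, 0 < x) ∧ (∀ x ∈ s, ¬Even x) := by
  constructor
  · rintro hs
    obtain ⟨π, hπ, rfl⟩ := Finset.mem_image.1 hs
    rw [Nat.Partition.odds, Nat.Partition.restricted, Finset.mem_filter] at hπ
    exact ⟨π.parts_sum, fun x hx => π.parts_pos hx, hπ.2⟩
  · rintro ⟨h1, h2, h3⟩
    refine Finset.mem_image.2 ⟨⟨s, fun hi => h2 _ hi, h1⟩, ?_, rfl⟩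
    rw [Nat.Partition.odds, Nat.Partition.restricted, Finset.mem_filter]
    exact ⟨Finset.mem_univ _, h3⟩

lemma card_DD (m : ℕ) : (DD m).card = D m :=
  Finset.card_image_of_injective _ (parts_injective m)

lemma card_OO (m : ℕ) : (OO m).card = O m :=
  Finset.card_image_of_injective _ (parts_injective m)

lemma mem_Icc_of_mem_sum {s : Multiset ℕ} {n x : ℕ} (hsum : s.sum = n)
    (hpos : ∀ y ∈ s, 0 < y) (hx : x ∈ s) : x ∈ Finset.Icc 1 n := by
  refine Finset.mem_Icc.2 ⟨hpos x hx, ?_⟩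
  rw [← hsum]
  exact Multiset.single_le_sum (fun y _ => Nat.zero_le y) x hx

/-- Counting pairs: total number of distinct-part-sizes equals a sum of fiber counts. -/
lemma sum_sizes_eq (T : Finset (Multiset ℕ)) (n : ℕ)
    (h : ∀ s ∈ T, ∀ x ∈ s, x ∈ Finset.Icc 1 n) :
    ∑ s ∈ T, s.toFinset.card = ∑ k ∈ Finset.Icc 1 n, (T.filter (fun s => k ∈ s)).card := by
  classical
  have : ∀ s ∈ T, s.toFinset.card = ∑ k ∈ Finset.Icc 1 n, if k ∈ s then 1 else 0 := by
    intro s hs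
    have hset : s.toFinset = (Finset.Icc 1 n).filter (fun x => x ∈ s) := by
      apply Finset.ext
      intro x
      simp only [Finset.mem_filter, Multiset.mem_toFinset]
      exact ⟨fun hx => ⟨h s hs x hx, hx⟩, fun hx => hx.2⟩
    rw [hset, Finset.card_filter]
  rw [Finset.sum_congr rfl this, Finset.sum_comm]
  refine Finset.sum_congr rfl fun k _ => ?_
  rw [Finset.card_filter]

/-- Erase-a-copy bijection for distinct partitions. -/
lemma distinct_fiber (n k : ℕ) (hk : 1 ≤ k) (hkn : k ≤ n) :
    ((DD n).filter (fun s => k ∈ s)).card = Dav (n - k) k := by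
  classical
  refine Finset.card_nbij' (fun s => s.erase k) (fun t => k ::ₘ t) ?_ ?_ ?_ ?_
  · intro s hs
    dsimp only
    rw [Finset.mem_coe, Finset.mem_filter] at hs
    obtain ⟨hsD, hks⟩ := hs
    obtain ⟨h1, h2, h3⟩ := mem_DD.1 hsD
    simp only [Dav, Finset.mem_coe, Finset.mem_filter]
    refine ⟨mem_DD.2 ⟨?_, ?_, h3.erase k⟩, ?_⟩
    · have := Multiset.cons_erase hks
      have hsum : k + (s.erase k).sum = n := by
        rw [← h1, ← Multiset.sum_cons, this]
      omega
    · exact fun x hx => h2 x (Multiset.mem_of_mem_erase hx)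
    · exact h3.notMem_erase
  · intro t ht
    dsimp only
    simp only [Dav, Finset.mem_coe, Finset.mem_filter] at ht
    obtain ⟨htD, hkt⟩ := ht
    obtain ⟨h1, h2, h3⟩ := mem_DD.1 htD
    rw [Finset.mem_coe, Finset.mem_filter]
    refine ⟨mem_DD.2 ⟨?_, ?_, ?_⟩, Multiset.mem_cons_self k t⟩
    · rw [Multiset.sum_cons, h1]; omega
    · intro x hx
      rcases Multiset.mem_cons.1 hx with rfl | hx
      · exact hk
      · exact h2 x hx
    · exact Multiset.nodup_cons.2 ⟨hkt, h3⟩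
  · intro s hs
    rw [Finset.mem_coe, Finset.mem_filter] at hs
    exact Multiset.cons_erase hs.2
  · intro t ht
    simp only [Dav, Finset.mem_coe, Finset.mem_filter] at ht
    exact Multiset.erase_cons_head k t

/-- Erase-a-copy bijection for odd partitions. -/
lemma odd_fiber (n k : ℕ) (hk : 1 ≤ k) (hkn : k ≤ n) (hodd : ¬Even k) :
    ((OO n).filter (fun s => k ∈ s)).card = O (n - k) := by
  classical
  rw [← card_OO]
  refine Finset.card_nbij' (fun s => s.erase k) (fun t => k ::ₘ t) ?_ ?_ ?_ ?_
  · intro s hs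
    dsimp only
    rw [Finset.mem_coe, Finset.mem_filter] at hs
    obtain ⟨hsO, hks⟩ := hs
    obtain ⟨h1, h2, h3⟩ := mem_OO.1 hsO
    refine mem_OO.2 ⟨?_, ?_, ?_⟩
    · have hsum : k + (s.erase k).sum = n := by
        rw [← h1, ← Multiset.sum_cons, Multiset.cons_erase hks]
      omega
    · exact fun x hx => h2 x (Multiset.mem_of_mem_erase hx)
    · exact fun x hx => h3 x (Multiset.mem_of_mem_erase hx)
  · intro t ht
    dsimp only
    obtain ⟨h1, h2, h3⟩ := mem_OO.1 ht
    rw [Finset.mem_coe, Finset.mem_filter]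
    refine ⟨mem_OO.2 ⟨?_, ?_, ?_⟩, Multiset.mem_cons_self k t⟩
    · rw [Multiset.sum_cons, h1]; omega
    · intro x hx
      rcases Multiset.mem_cons.1 hx with rfl | hx
      · exact hk
      · exact h2 x hx
    · intro x hx
      rcases Multiset.mem_cons.1 hx with rfl | hx
      · exact hodd
      · exact h3 x hx
  · intro s hs
    rw [Finset.mem_coe, Finset.mem_filter] at hs
    exact Multiset.cons_erase hs.2
  · intro t _
    exact Multiset.erase_cons_head k t

lemma odd_fiber_even (n k : ℕ) (heven : Even k) :
    ((OO n).filter (fun s => k ∈ s)).card = 0 := by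
  classical
  rw [Finset.card_eq_zero]
  apply Finset.filter_eq_empty_iff.2
  intro s hs hk
  exact (mem_OO.1 hs).2.2 k hk heven

/-- If `k > m` then no distinct partition of `m` contains `k`. -/
lemma Dav_of_gt {m k : ℕ} (h : m < k) : Dav m k = D m := by
  classical
  simp only [Dav]
  rw [← card_DD]
  congr 1
  apply Finset.filter_true_of_mem
  intro s hs hks
  obtain ⟨h1, h2, _⟩ := mem_DD.1 hs
  have := Finset.mem_Icc.1 (mem_Icc_of_mem_sum h1 h2 hks)
  omega

/-- Splitting distinct partitions of `m` by whether they contain `k`. -/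
lemma D_split (m k : ℕ) (hk : 1 ≤ k) (hkm : k ≤ m) :
    D m = Dav m k + Dav (m - k) k := by
  have h1 : ((DD m).filter (fun s => k ∈ s)).card
      + ((DD m).filter (fun s => ¬ k ∈ s)).card = (DD m).card :=
    Finset.card_filter_add_card_filter_not _
  have h2 := distinct_fiber m k hk hkm
  have h3 := card_DD m
  simp only [Dav] at *
  omega


/-- Multisets of parts of Beck partitions of `n`. -/
def CC (n : ℕ) : Finset (Multiset ℕ) :=
  (((Finset.univ : Finset (Nat.Partition n))).filter
    (fun π => ∃ a ∈ π.parts.toFinset, π.parts.count a = 3 ∧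
      ∀ b ∈ π.parts.toFinset, b ≠ a → π.parts.count b = 1)).image Nat.Partition.parts

lemma card_CC (n : ℕ) : (CC n).card = cBeck n :=
  Finset.card_image_of_injective _ (parts_injective n)

lemma mem_CC {n : ℕ} {s : Multiset ℕ} :
    s ∈ CC n ↔ s.sum = n ∧ (∀ x ∈ s, 0 < x) ∧
      ∃ a ∈ s, s.count a = 3 ∧ ∀ b ∈ s, b ≠ a → s.count b = 1 := by
  constructor
  · rintro hs
    obtain ⟨π, hπ, rfl⟩ := Finset.mem_image.1 hs
    rw [Finset.mem_filter] at hπ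
    obtain ⟨-, a, ha, h3, h1⟩ := hπ
    exact ⟨π.parts_sum, fun x hx => π.parts_pos hx,
      a, Multiset.mem_toFinset.1 ha, h3,
      fun b hb hba => h1 b (Multiset.mem_toFinset.2 hb) hba⟩
  · rintro ⟨h1, h2, a, ha, h3, h4⟩
    refine Finset.mem_image.2 ⟨⟨s, fun hi => h2 _ hi, h1⟩, ?_, rfl⟩
    rw [Finset.mem_filter]
    exact ⟨Finset.mem_univ _, a, Multiset.mem_toFinset.2 ha, h3,
      fun b hb hba => h4 b (Multiset.mem_toFinset.1 hb) hba⟩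

lemma CC_eq_biUnion (n : ℕ) :
    CC n = (Finset.Icc 1 n).biUnion
      (fun k => (CC n).filter (fun s => s.count k = 3)) := by
  apply Finset.ext
  intro s
  simp only [Finset.mem_biUnion, Finset.mem_filter]
  constructor
  · intro hs
    obtain ⟨h1, h2, a, ha, h3, _⟩ := mem_CC.1 hs
    exact ⟨a, mem_Icc_of_mem_sum h1 h2 ha, hs, h3⟩
  · rintro ⟨k, -, hs, -⟩
    exact hs

lemma CC_disjoint (n : ℕ) : ∀ x ∈ Finset.Icc 1 n, ∀ y ∈ Finset.Icc 1 n, x ≠ y →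
    Disjoint ((CC n).filter (fun s => s.count x = 3))
      ((CC n).filter (fun s => s.count y = 3)) := by
  intro x _ y _ hxy
  rw [Finset.disjoint_left]
  intro s hx hy
  rw [Finset.mem_filter] at hx hy
  obtain ⟨hs, hcx⟩ := hx
  obtain ⟨-, hcy⟩ := hy
  obtain ⟨-, -, a, -, -, h4⟩ := mem_CC.1 hs
  have hxa : x = a := by
    by_contra h
    have := h4 x (Multiset.count_pos.1 (by omega)) h
    omega
  have hya : y = a := by
    by_contra h
    have := h4 y (Multiset.count_pos.1 (by omega)) h
    omega
  exact hxy (hxa.trans hya.symm)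

lemma beck_fiber (n k : ℕ) (hk : 1 ≤ k) :
    ((CC n).filter (fun s => s.count k = 3)).card
      = if 3 * k ≤ n then Dav (n - 3 * k) k else 0 := by
  by_cases h3k : 3 * k ≤ n
  · rw [if_pos h3k]
    refine Finset.card_nbij' (fun s => s - Multiset.replicate 3 k)
      (fun t => t + Multiset.replicate 3 k) ?_ ?_ ?_ ?_
    · intro s hs
      dsimp only
      rw [Finset.mem_coe, Finset.mem_filter] at hs
      obtain ⟨hsC, hck⟩ := hs
      obtain ⟨h1, h2, a, ha, h3, h4⟩ := mem_CC.1 hsC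
      have hka : k = a := by
        by_contra h
        have := h4 k (Multiset.count_pos.1 (by omega)) h
        omega
      subst hka
      have hle : Multiset.replicate 3 k ≤ s :=
        Multiset.le_count_iff_replicate_le.1 (by omega)
      have hcnt : ∀ b, (s - Multiset.replicate 3 k).count b
          = s.count b - (if b = k then 3 else 0) := by
        intro b
        rw [Multiset.count_sub, Multiset.count_replicate]
        by_cases hb : b = k
        · subst hb; simp
        · rw [if_neg hb, if_neg (Ne.symm hb)]
      have hsub : (s - Multiset.replicate 3 k) + Multiset.replicate 3 k = s :=
        tsub_add_cancel_of_le hle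
      have hsum : (s - Multiset.replicate 3 k).sum + 3 * k = n := by
        have := congrArg Multiset.sum hsub
        rw [Multiset.sum_add, Multiset.sum_replicate] at this
        simp only [smul_eq_mul] at this
        omega
      simp only [Dav, Finset.mem_coe, Finset.mem_filter]
      refine ⟨mem_DD.2 ⟨by omega, ?_, ?_⟩, ?_⟩
      · intro x hx
        exact h2 x (Multiset.mem_of_le (Multiset.sub_le_self _ _) hx)
      · rw [Multiset.nodup_iff_count_le_one]
        intro b
        rw [hcnt b]
        by_cases hbk : b = k
        · subst hbk
          rw [if_pos rfl]
          omega
        · by_cases hbs : b ∈ s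
          · have := h4 b hbs hbk
            omega
          · have : s.count b = 0 := Multiset.count_eq_zero.2 hbs
            omega
      · rw [← Multiset.count_eq_zero, hcnt k]
        rw [if_pos rfl]
        omega
    · intro t ht
      dsimp only
      simp only [Dav, Finset.mem_coe, Finset.mem_filter] at ht
      obtain ⟨htD, hkt⟩ := ht
      obtain ⟨h1, h2, h3⟩ := mem_DD.1 htD
      have hcnt : ∀ b, (t + Multiset.replicate 3 k).count b
          = t.count b + (if b = k then 3 else 0) := by
        intro b
        rw [Multiset.count_add, Multiset.count_replicate]
        by_cases hb : b = k
        · subst hb; simp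
        · rw [if_neg hb, if_neg (Ne.symm hb)]
      rw [Finset.mem_coe, Finset.mem_filter]
      have hck : (t + Multiset.replicate 3 k).count k = 3 := by
        rw [hcnt k, Multiset.count_eq_zero.2 hkt]
        simp
      refine ⟨mem_CC.2 ⟨?_, ?_, k, ?_, hck, ?_⟩, hck⟩
      · rw [Multiset.sum_add, Multiset.sum_replicate, h1]
        simp only [smul_eq_mul]
        omega
      · intro x hx
        rcases Multiset.mem_add.1 hx with hx | hx
        · exact h2 x hx
        · rw [Multiset.eq_of_mem_replicate hx]; omega
      · exact Multiset.count_pos.1 (by omega)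
      · intro b hb hbk
        rw [hcnt b, if_neg hbk]
        rcases Multiset.mem_add.1 hb with hb | hb
        · rw [Multiset.count_eq_one_of_mem h3 hb]
        · exact absurd (Multiset.eq_of_mem_replicate hb) hbk
    · intro s hs
      rw [Finset.mem_coe, Finset.mem_filter] at hs
      obtain ⟨hsC, hck⟩ := hs
      exact tsub_add_cancel_of_le (Multiset.le_count_iff_replicate_le.1 (by omega))
    · intro t ht
      simp only [Dav, Finset.mem_coe, Finset.mem_filter] at ht
      exact add_tsub_cancel_right _ _
  · rw [if_neg h3k, Finset.card_eq_zero]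
    apply Finset.filter_eq_empty_iff.2
    intro s hs hck
    obtain ⟨h1, -, -⟩ := mem_CC.1 hs
    have hle : Multiset.replicate 3 k ≤ s :=
      Multiset.le_count_iff_replicate_le.1 (by omega)
    have := congrArg Multiset.sum (tsub_add_cancel_of_le hle)
    rw [Multiset.sum_add, Multiset.sum_replicate] at this
    simp only [smul_eq_mul] at this
    omega

lemma cBeck_eq (n : ℕ) :
    cBeck n = ∑ k ∈ Finset.Icc 1 n, (if 3 * k ≤ n then Dav (n - 3 * k) k else 0) := by
  rw [← card_CC, CC_eq_biUnion n, Finset.card_biUnion (CC_disjoint n)]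
  exact Finset.sum_congr rfl fun k hk => beck_fiber n k (Finset.mem_Icc.1 hk).1


lemma euler (m : ℕ) : O m = D m :=
  Theorems100.partition_theorem m

/-- Key per-term identity. -/
lemma key (n k : ℕ) (hk : 1 ≤ k) (hkn : k ≤ n) :
    (Dav (n - k) k : ℤ) - (if 3 * k ≤ n then (Dav (n - 3 * k) k : ℤ) else 0)
      = (D (n - k) : ℤ) - (if 2 * k ≤ n then (D (n - 2 * k) : ℤ) else 0) := by
  by_cases h2 : 2 * k ≤ n
  · have hsplit1 : D (n - k) = Dav (n - k) k + Dav (n - 2 * k) k := by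
      have := D_split (n - k) k hk (by omega)
      have e : n - k - k = n - 2 * k := by omega
      rwa [e] at this
    by_cases h3 : 3 * k ≤ n
    · have hsplit2 : D (n - 2 * k) = Dav (n - 2 * k) k + Dav (n - 3 * k) k := by
        have := D_split (n - 2 * k) k hk (by omega)
        have e : n - 2 * k - k = n - 3 * k := by omega
        rwa [e] at this
      rw [if_pos h3, if_pos h2]
      omega
    · have h4 : Dav (n - 2 * k) k = D (n - 2 * k) := Dav_of_gt (by omega)
      rw [if_neg h3, if_pos h2]
      omega
  · have h4 : Dav (n - k) k = D (n - k) := Dav_of_gt (by omega)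
    rw [if_neg (by omega : ¬ 3 * k ≤ n), if_neg h2]
    omega

/-- Reindexing the doubled sum onto even indices. -/
lemma even_reindex (n : ℕ) :
    (∑ k ∈ Finset.Icc 1 n, if 2 * k ≤ n then (D (n - 2 * k) : ℤ) else 0)
      = ∑ k ∈ Finset.Icc 1 n, if Even k then (D (n - k) : ℤ) else 0 := by
  rw [← Finset.sum_filter, ← Finset.sum_filter]
  refine Finset.sum_nbij' (fun k => 2 * k) (fun e => e / 2) ?_ ?_ ?_ ?_ ?_
  all_goals intro a ha
  · simp only [Finset.mem_filter, Finset.mem_Icc] at ha ⊢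
    exact ⟨⟨by omega, by omega⟩, ⟨a, by omega⟩⟩
  · simp only [Finset.mem_filter, Finset.mem_Icc] at ha ⊢
    obtain ⟨⟨h1, h2⟩, c, hc⟩ := ha
    refine ⟨⟨by omega, by omega⟩, by omega⟩
  · simp only [Finset.mem_filter, Finset.mem_Icc] at ha
    omega
  · simp only [Finset.mem_filter, Finset.mem_Icc] at ha
    obtain ⟨⟨h1, h2⟩, c, hc⟩ := ha
    omega
  · simp only [Finset.mem_filter, Finset.mem_Icc] at ha
    rfl

/-- Sum of number of parts over distinct partitions. -/
lemma distinct_sum (n : ℕ) :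
    (∑ π ∈ Nat.Partition.distincts n, π.parts.card)
      = ∑ k ∈ Finset.Icc 1 n, Dav (n - k) k := by
  have h0 : (∑ π ∈ Nat.Partition.distincts n, π.parts.card)
      = ∑ s ∈ DD n, s.toFinset.card := by
    rw [DD, Finset.sum_image (fun p _ q _ h => parts_injective n h)]
    refine Finset.sum_congr rfl fun π hπ => ?_
    rw [Nat.Partition.distincts, Finset.mem_filter] at hπ
    rw [Multiset.toFinset_card_of_nodup hπ.2]
  rw [h0, sum_sizes_eq (DD n) n (fun s hs x hx => by
    obtain ⟨h1, h2, -⟩ := mem_DD.1 hs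
    exact mem_Icc_of_mem_sum h1 h2 hx)]
  refine Finset.sum_congr rfl fun k hk => ?_
  obtain ⟨hk1, hkn⟩ := Finset.mem_Icc.1 hk
  exact distinct_fiber n k hk1 hkn

/-- Sum of number of distinct part sizes over odd partitions. -/
lemma odd_sum (n : ℕ) :
    (∑ π ∈ Nat.Partition.odds n, π.parts.toFinset.card)
      = ∑ k ∈ Finset.Icc 1 n, if Even k then 0 else O (n - k) := by
  have h0 : (∑ π ∈ Nat.Partition.odds n, π.parts.toFinset.card)
      = ∑ s ∈ OO n, s.toFinset.card := by
    rw [OO, Finset.sum_image (fun p _ q _ h => parts_injective n h)]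
  rw [h0, sum_sizes_eq (OO n) n (fun s hs x hx => by
    obtain ⟨h1, h2, -⟩ := mem_OO.1 hs
    exact mem_Icc_of_mem_sum h1 h2 hx)]
  refine Finset.sum_congr rfl fun k hk => ?_
  obtain ⟨hk1, hkn⟩ := Finset.mem_Icc.1 hk
  by_cases he : Even k
  · rw [if_pos he]
    exact odd_fiber_even n k he
  · rw [if_neg he]
    exact odd_fiber n k hk1 hkn he

end AndrewsBeck

theorem andrews_beck (n : ℕ) :
    ((∑ π ∈ Nat.Partition.distincts n, π.parts.card : ℕ) : ℤ)
      - ((∑ π ∈ Nat.Partition.odds n, π.parts.toFinset.card : ℕ) : ℤ) = cBeck n := by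
  open AndrewsBeck in
  rw [distinct_sum n, odd_sum n, cBeck_eq n]
  push_cast
  have hkey : ∑ k ∈ Finset.Icc 1 n, (Dav (n - k) k : ℤ)
      - ∑ k ∈ Finset.Icc 1 n, (if 3 * k ≤ n then (Dav (n - 3 * k) k : ℤ) else 0)
      = ∑ k ∈ Finset.Icc 1 n, ((D (n - k) : ℤ) - if 2 * k ≤ n then (D (n - 2 * k) : ℤ) else 0) := by
    rw [← Finset.sum_sub_distrib]
    refine Finset.sum_congr rfl fun k hk => ?_
    obtain ⟨h1, h2⟩ := Finset.mem_Icc.1 hk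
    exact key n k h1 h2
  have hsplit : ∑ k ∈ Finset.Icc 1 n, ((D (n - k) : ℤ) - if 2 * k ≤ n then (D (n - 2 * k) : ℤ) else 0)
      = ∑ k ∈ Finset.Icc 1 n, (if Even k then 0 else (O (n - k) : ℤ)) := by
    rw [Finset.sum_sub_distrib, even_reindex n]
    rw [← Finset.sum_sub_distrib]
    refine Finset.sum_congr rfl fun k hk => ?_
    by_cases he : Even k
    · rw [if_pos he, if_pos he]
      ring
    · rw [if_neg he, if_neg he, euler (n - k)]
      ring
  have hB : ((∑ k ∈ Finset.Icc 1 n, if Even k then 0 else O (n - k) : ℕ) : ℤ)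
      = ∑ k ∈ Finset.Icc 1 n, (if Even k then 0 else (O (n - k) : ℤ)) := by
    push_cast
    refine Finset.sum_congr rfl fun k _ => ?_
    split_ifs <;> simp
  have hC : ((∑ k ∈ Finset.Icc 1 n, if 3 * k ≤ n then Dav (n - 3 * k) k else 0 : ℕ) : ℤ)
      = ∑ k ∈ Finset.Icc 1 n, (if 3 * k ≤ n then (Dav (n - 3 * k) k : ℤ) else 0) := by
    push_cast
    refine Finset.sum_congr rfl fun k _ => ?_
    split_ifs <;> simp
  linarith [hkey, hsplit, hB, hC]
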